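/- Let T > 0 and let q = (q^(1), q^(2)) : ℝ → ℝ² be a continuously differentiable T-periodic map satisfying, for all t ∈ ℝ, q^(1)(t) = -q^(1)(t + T/2) and q^(2)(t) = -q^(2)(t + T/4). Then for every t ∈ ℝ, the Euclidean norm of q(t) satisfies |q(t)| ≤ (√(3T)/4) · (∫₀ᵀ |q̇(s)|² ds)^{1/2}. -/

import Mathlib

open intervalIntegral

/-- Cauchy–Schwarz for interval integrals of continuous functions. -/
lemma cs_interval (g : ℝ → ℝ) (hg : Continuous g) (a b : ℝ) (hab : a < b) :
    (∫ s in a..b, g s) ^ 2 ≤ (b - a) * ∫ s in a..b, (g s) ^ 2 := by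
  set L : ℝ := b - a with hL
  have hLpos : 0 < L := by simp [hL]; linarith
  set I : ℝ := ∫ s in a..b, g s with hI
  have hint : IntervalIntegrable g MeasureTheory.volume a b := hg.intervalIntegrable a b
  have hint2 : IntervalIntegrable (fun s => (g s) ^ 2) MeasureTheory.volume a b :=
    (hg.pow 2).intervalIntegrable a b
  have key : 0 ≤ ∫ s in a..b, (L * g s - I) ^ 2 :=
    intervalIntegral.integral_nonneg hab.le (fun x _ => sq_nonneg _)
  have expand : ∫ s in a..b, (L * g s - I) ^ 2
      = L ^ 2 * (∫ s in a..b, (g s) ^ 2) - 2 * L * I * I + I ^ 2 * L := by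
    have : ∀ s, (L * g s - I) ^ 2 = L ^ 2 * (g s) ^ 2 - (2 * L * I) * g s + I ^ 2 := by
      intro s; ring
    simp only [this]
    rw [intervalIntegral.integral_add (((hint2.const_mul _).sub (hint.const_mul _)))
        (intervalIntegrable_const),
      intervalIntegral.integral_sub (hint2.const_mul _) (hint.const_mul _),
      intervalIntegral.integral_const_mul, intervalIntegral.integral_const_mul,
      intervalIntegral.integral_const]
    ring_nf
    rw [hL, hI]; ring
  rw [expand] at key
  have key2 : L * I ^ 2 ≤ L ^ 2 * ∫ s in a..b, (g s) ^ 2 := by nlinarith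
  have := mul_le_mul_of_nonneg_left key2 (le_of_lt (inv_pos.mpr hLpos))
  calc I ^ 2 = L⁻¹ * (L * I ^ 2) := by field_simp
    _ ≤ L⁻¹ * (L ^ 2 * ∫ s in a..b, (g s) ^ 2) := this
    _ = L * ∫ s in a..b, (g s) ^ 2 := by field_simp

/-- Bound for an `S`-antiperiodic `C¹` real function. -/
lemma anti_bound (f : ℝ → ℝ) (hf : ContDiff ℝ 1 f) (S : ℝ) (hS : 0 < S)
    (ha : ∀ t, f t = - f (t + S)) (t : ℝ) :
    (f t) ^ 2 ≤ S / 4 * ∫ s in t..(t + S), (deriv f s) ^ 2 := by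
  have hderiv : Continuous (deriv f) := (hf.iterate_deriv' 0 1).continuous
  have hderivC : Continuous (deriv f) := hf.continuous_deriv le_rfl
  have hftc : ∫ s in t..(t + S), deriv f s = f (t + S) - f t := by
    apply intervalIntegral.integral_deriv_eq_sub
    · intro x _; exact hf.differentiable one_ne_zero x
    · exact hderivC.intervalIntegrable _ _
  have hval : ∫ s in t..(t + S), deriv f s = -2 * f t := by
    have h' : f (t + S) = - f t := by have := ha t; linarith
    rw [hftc, h']; ring
  have hcs := cs_interval (deriv f) hderivC t (t + S) (by linarith)
  rw [hval] at hcs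
  have : (-2 * f t) ^ 2 = 4 * (f t) ^ 2 := by ring
  rw [this] at hcs
  have : t + S - t = S := by ring
  rw [this] at hcs
  linarith

/-- Estimate of `|q(t)|` for a `T`-periodic `C¹` loop in `ℝ²` (Double-Eight case) whose
first component is `T/2`-antiperiodic and second component is `T/4`-antiperiodic:
`|q(t)| ≤ (√(3T)/4) (∫₀ᵀ |q̇|²)^{1/2}`. -/
theorem norm_bound_double_eight (T : ℝ) (hT : 0 < T)
    (q : ℝ → EuclideanSpace ℝ (Fin 2))
    (hq : ContDiff ℝ 1 q)
    (hper : ∀ t : ℝ, q (t + T) = q t)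
    (h1 : ∀ t : ℝ, q t 0 = -q (t + T / 2) 0)
    (h2 : ∀ t : ℝ, q t 1 = -q (t + T / 4) 1) :
    ∀ t : ℝ, ‖q t‖ ≤ Real.sqrt (3 * T) / 4 *
      Real.sqrt (∫ s in (0 : ℝ)..T, ‖deriv q s‖ ^ 2) := by
  intro t
  -- component functions
  set f : Fin 2 → ℝ → ℝ := fun i s => q s i with hf
  have hcomp : ∀ (i : Fin 2) (s : ℝ), HasDerivAt (f i) (deriv q s i) s := by
    intro i s
    have hd := (hq.differentiable one_ne_zero s).hasDerivAt
    have := (EuclideanSpace.proj (𝕜 := ℝ) i).hasFDerivAt.comp_hasDerivAt s hd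
    exact this
  have hfC : ∀ i : Fin 2, ContDiff ℝ 1 (f i) := by
    intro i
    exact (EuclideanSpace.proj (𝕜 := ℝ) i).contDiff.comp hq
  have hfd : ∀ (i : Fin 2) (s : ℝ), deriv (f i) s = deriv q s i :=
    fun i s => (hcomp i s).deriv
  -- derivative components are continuous
  have hqd : Continuous (deriv q) := hq.continuous_deriv le_rfl
  have hfdC : ∀ i : Fin 2, Continuous fun s => deriv q s i := by
    intro i
    exact (EuclideanSpace.proj (𝕜 := ℝ) i).continuous.comp hqd
  -- periodicity of the derivative
  have hqdper : ∀ s : ℝ, deriv q (s + T) = deriv q s := by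
    intro s
    have hq' : (fun u => q (u + T)) = q := funext hper
    calc deriv q (s + T) = deriv (fun u => q (u + T)) s := (deriv_comp_add_const q T s).symm
      _ = deriv q s := by rw [hq']
  -- the integrand ‖deriv q‖² splits and is periodic
  have hnormsq : ∀ s : ℝ, ‖deriv q s‖ ^ 2 = (deriv q s 0) ^ 2 + (deriv q s 1) ^ 2 := by
    intro s
    rw [EuclideanSpace.norm_eq, Real.sq_sqrt (by positivity)]
    simp [Fin.sum_univ_two, sq_abs]
  -- bound ∫_t^{t+S} (deriv q s i)² ≤ ∫_0^T (deriv q s i)² for 0 < S ≤ T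
  have hseg : ∀ (i : Fin 2) (S : ℝ), 0 < S → S ≤ T → ∀ u : ℝ,
      (∫ s in u..(u + S), (deriv q s i) ^ 2) ≤ ∫ s in (0 : ℝ)..T, (deriv q s i) ^ 2 := by
    intro i S hS hST u
    have hint : ∀ a b : ℝ, IntervalIntegrable (fun s => (deriv q s i) ^ 2)
        MeasureTheory.volume a b := fun a b => ((hfdC i).pow 2).intervalIntegrable a b
    have hsplit : (∫ s in u..(u + T), (deriv q s i) ^ 2)
        = (∫ s in u..(u + S), (deriv q s i) ^ 2) + ∫ s in (u + S)..(u + T), (deriv q s i) ^ 2 :=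
      (intervalIntegral.integral_add_adjacent_intervals (hint _ _) (hint _ _)).symm
    have hpos : 0 ≤ ∫ s in (u + S)..(u + T), (deriv q s i) ^ 2 :=
      intervalIntegral.integral_nonneg (by linarith) (fun x _ => sq_nonneg _)
    have hper' : Function.Periodic (fun s => (deriv q s i) ^ 2) T := by
      intro s; simp [hqdper s]
    have := hper'.intervalIntegral_add_eq u 0
    simp only [zero_add] at this
    linarith [hsplit ▸ (le_of_eq this.symm)]
  -- antiperiodic bounds
  have hb0 : (q t 0) ^ 2 ≤ T / 8 * ∫ s in (0 : ℝ)..T, (deriv q s 0) ^ 2 := by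
    have ha : ∀ u, f 0 u = - f 0 (u + T / 2) := fun u => by simpa [hf] using h1 u
    have := anti_bound (f 0) (hfC 0) (T / 2) (by linarith) ha t
    simp only [hfd] at this
    have hseg' := hseg 0 (T / 2) (by linarith) (by linarith) t
    calc (q t 0) ^ 2 = (f 0 t) ^ 2 := by simp [hf]
      _ ≤ T / 2 / 4 * ∫ s in t..(t + T / 2), (deriv q s 0) ^ 2 := this
      _ ≤ T / 8 * ∫ s in (0 : ℝ)..T, (deriv q s 0) ^ 2 := by
          have h4 : T / 2 / 4 = T / 8 := by ring
          rw [h4]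
          exact mul_le_mul_of_nonneg_left hseg' (by linarith)
  have hb1 : (q t 1) ^ 2 ≤ T / 16 * ∫ s in (0 : ℝ)..T, (deriv q s 1) ^ 2 := by
    have ha : ∀ u, f 1 u = - f 1 (u + T / 4) := fun u => by simpa [hf] using h2 u
    have := anti_bound (f 1) (hfC 1) (T / 4) (by linarith) ha t
    simp only [hfd] at this
    have hseg' := hseg 1 (T / 4) (by linarith) (by linarith) t
    calc (q t 1) ^ 2 = (f 1 t) ^ 2 := by simp [hf]
      _ ≤ T / 4 / 4 * ∫ s in t..(t + T / 4), (deriv q s 1) ^ 2 := this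
      _ ≤ T / 16 * ∫ s in (0 : ℝ)..T, (deriv q s 1) ^ 2 := by
          have h4 : T / 4 / 4 = T / 16 := by ring
          rw [h4]
          exact mul_le_mul_of_nonneg_left hseg' (by linarith)
  -- combine
  set I : ℝ := ∫ s in (0 : ℝ)..T, ‖deriv q s‖ ^ 2 with hIdef
  have hIsplit : I = (∫ s in (0 : ℝ)..T, (deriv q s 0) ^ 2)
      + ∫ s in (0 : ℝ)..T, (deriv q s 1) ^ 2 := by
    rw [hIdef, ← intervalIntegral.integral_add (f := fun s => (deriv q s 0) ^ 2)
      (g := fun s => (deriv q s 1) ^ 2) (((hfdC 0).pow 2).intervalIntegrable 0 T)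
      (((hfdC 1).pow 2).intervalIntegrable 0 T)]
    exact intervalIntegral.integral_congr fun s _ => hnormsq s
  have hI0 : 0 ≤ ∫ s in (0 : ℝ)..T, (deriv q s 0) ^ 2 :=
    intervalIntegral.integral_nonneg hT.le (fun x _ => sq_nonneg _)
  have hI1 : 0 ≤ ∫ s in (0 : ℝ)..T, (deriv q s 1) ^ 2 :=
    intervalIntegral.integral_nonneg hT.le (fun x _ => sq_nonneg _)
  have hnq : ‖q t‖ ^ 2 = (q t 0) ^ 2 + (q t 1) ^ 2 := by
    rw [EuclideanSpace.norm_eq, Real.sq_sqrt (by positivity)]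
    simp [Fin.sum_univ_two, sq_abs]
  have hmain : ‖q t‖ ^ 2 ≤ 3 * T / 16 * I := by
    rw [hnq, hIsplit]
    nlinarith [hb0, hb1, hI0, hI1, hT.le]
  -- final square-root manipulation
  have hI : 0 ≤ I := by rw [hIsplit]; linarith
  have h1' : ‖q t‖ ≤ Real.sqrt (3 * T / 16 * I) := by
    rw [show Real.sqrt (3 * T / 16 * I) = Real.sqrt (3 * T / 16 * I) from rfl]
    have := Real.sqrt_le_sqrt hmain
    rwa [Real.sqrt_sq (norm_nonneg _)] at this
  refine h1'.trans (le_of_eq ?_)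
  rw [Real.sqrt_mul (by positivity : (0:ℝ) ≤ 3 * T / 16)]
  congr 1
  rw [show (3 * T / 16 : ℝ) = (3 * T) / 16 by ring, Real.sqrt_div (by positivity),
    show (16 : ℝ) = 4 ^ 2 by norm_num, Real.sqrt_sq (by norm_num : (0:ℝ) ≤ 4)]
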